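/- For every n ≥ 3 there exists a valid function f : {0,1}^n → {0,1} such that the phase state v_f of f is maximally entangled, i.e. for every index i ∈ {1,...,n} there do not exist a vector φ : {0,1} → ℂ and a vector ψ : {0,1}^{n−1} → ℂ with v_f(x) = φ(x_i) · ψ(x_1,...,x_{i−1},x_{i+1},...,x_n) for all x ∈ {0,1}^n. -/

import Mathlib

/-- A Boolean function `f : {0,1}^n → {0,1}` is *valid* if it is constant or balanced
(i.e. `f x = 0` for exactly `2^(n-1)` of the `2^n` inputs). -/
def ValidFn (n : ℕ) (f : (Fin n → Bool) → Bool) : Prop :=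
  (∃ a, ∀ x, f x = a) ∨
    (Finset.univ.filter fun x : Fin n → Bool => f x = false).card = 2 ^ (n - 1)

/-- For every `n ≥ 3` there is a valid `f : {0,1}^n → {0,1}` whose phase state
`v_f(x) = (-1)^(f x)` is maximally entangled: no qubit `i` can be factored out, i.e.
there are no `φ : {0,1} → ℂ` and `ψ : {0,1}^(n-1) → ℂ` with
`v_f(x) = φ(x_i) · ψ(x₁,...,x_{i-1},x_{i+1},...,x_n)` for all `x`. -/
theorem exists_valid_maximally_entangled (n : ℕ) (hn : 3 ≤ n) :
    ∃ f : (Fin n → Bool) → Bool, ValidFn n f ∧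
      ∀ i : Fin n,
        ¬ ∃ (φ : Bool → ℂ) (ψ : ({j : Fin n // j ≠ i} → Bool) → ℂ),
          ∀ x : Fin n → Bool,
            ((-1 : ℂ) ^ (f x).toNat) = φ (x i) * ψ (fun j => x j.1) := by
  classical
  have h0 : 0 < n := by omega
  have h1 : 1 < n := by omega
  have h2 : 2 < n := by omega
  have hn1 : n - 1 + 1 = n := by omega
  set i0 : Fin n := ⟨0, h0⟩ with hi0
  set i1 : Fin n := ⟨1, h1⟩ with hi1
  set i2 : Fin n := ⟨2, h2⟩ with hi2
  have h01 : i0 ≠ i1 := by simp [hi0, hi1, Fin.ext_iff]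
  have h02 : i0 ≠ i2 := by simp [hi0, hi2, Fin.ext_iff]
  have h12 : i1 ≠ i2 := by simp [hi1, hi2, Fin.ext_iff]
  have h10 : i1 ≠ i0 := Ne.symm h01
  set a : Fin n → Bool := fun _ => false with ha
  set b : Fin n → Bool := fun j => decide (j.val ≤ 1) with hb
  set f : (Fin n → Bool) → Bool :=
    fun x => xor (x i0) (decide (x = a) || decide (x = b)) with hf
  have hbi0 : b i0 = true := by simp [hb, hi0]
  have hbi1 : b i1 = true := by simp [hb, hi1]
  have hbi2 : b i2 = false := by simp [hb, hi2]
  have hab : a ≠ b := fun h => by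
    have := congrFun h i0; rw [hbi0] at this; simp [ha] at this
  refine ⟨f, ?_, ?_⟩
  · right
    have hsplit : (Finset.univ.filter fun x : Fin n → Bool => f x = false)
        = insert b (((Finset.univ.filter fun x : Fin n → Bool => x i0 = false)).erase a) := by
      ext x
      simp only [Finset.mem_filter, Finset.mem_univ, true_and, Finset.mem_insert,
        Finset.mem_erase]
      by_cases hxa : x = a
      · subst hxa
        simp [hf, ha, hab]
        exact hab
      · by_cases hxb : x = b
        · subst hxb
          simp [hf, hbi0, hxa]
        · simp [hf, hxa, hxb]
    have hcard0 : (Finset.univ.filter fun x : Fin n → Bool => x i0 = false).card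
        = 2 ^ (n - 1) := by
      have hbij : (Finset.univ.filter fun x : Fin n → Bool => x i0 = false).card
          = (Finset.univ.filter fun x : Fin n → Bool => ¬ x i0 = false).card := by
        apply Finset.card_nbij' (i := fun x => Function.update x i0 true)
          (j := fun x => Function.update x i0 false)
        · intro x hx
          simp [Function.update_self]
        · intro x hx
          simp [Function.update_self]
        · intro x hx
          simp only [Finset.mem_coe, Finset.mem_filter, Finset.mem_univ, true_and] at hx
          funext j
          by_cases hj : j = i0
          · subst hj; simp [Function.update_self, hx]
          · simp [Function.update_of_ne hj]
        · intro x hx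
          simp only [Finset.mem_coe, Finset.mem_filter, Finset.mem_univ, true_and, Bool.not_eq_false] at hx
          funext j
          by_cases hj : j = i0
          · subst hj; simp [Function.update_self, hx]
          · simp [Function.update_of_ne hj]
      have htot : (Finset.univ.filter fun x : Fin n → Bool => x i0 = false).card
          + (Finset.univ.filter fun x : Fin n → Bool => ¬ x i0 = false).card
          = (Finset.univ : Finset (Fin n → Bool)).card :=
        Finset.card_filter_add_card_filter_not (p := fun x : Fin n → Bool => x i0 = false)
      have huniv : (Finset.univ : Finset (Fin n → Bool)).card = 2 ^ n := by
        rw [Finset.card_univ, Fintype.card_fun]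
        simp
      have hpow : 2 ^ n = 2 * 2 ^ (n - 1) := by
        calc 2 ^ n = 2 ^ (n - 1 + 1) := by rw [hn1]
          _ = 2 * 2 ^ (n - 1) := by rw [pow_succ, mul_comm]
      refine Nat.eq_of_mul_eq_mul_left two_pos ?_
      calc 2 * (Finset.univ.filter fun x : Fin n → Bool => x i0 = false).card
          = (Finset.univ.filter fun x : Fin n → Bool => x i0 = false).card
            + (Finset.univ.filter fun x : Fin n → Bool => x i0 = false).card := two_mul _
        _ = (Finset.univ.filter fun x : Fin n → Bool => x i0 = false).card
            + (Finset.univ.filter fun x : Fin n → Bool => ¬ x i0 = false).card := by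
              rw [hbij]
        _ = (Finset.univ : Finset (Fin n → Bool)).card := htot
        _ = 2 ^ n := huniv
        _ = 2 * 2 ^ (n - 1) := hpow
    have hamem : a ∈ (Finset.univ.filter fun x : Fin n → Bool => x i0 = false) := by
      simp [Finset.mem_filter, ha]
    have hbnot : b ∉ ((Finset.univ.filter fun x : Fin n → Bool => x i0 = false)).erase a := by
      simp [Finset.mem_erase, Finset.mem_filter, hbi0]
    rw [hsplit, Finset.card_insert_of_notMem hbnot, Finset.card_erase_of_mem hamem, hcard0,
      Nat.sub_add_cancel (Nat.one_le_pow _ _ (by norm_num))]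
  · rintro i ⟨φ, ψ, h⟩
    set flip : (Fin n → Bool) → (Fin n → Bool) :=
      fun x => Function.update x i (!(x i)) with hflip
    have hrest : ∀ x : Fin n → Bool,
        (fun j : {j : Fin n // j ≠ i} => flip x j.1) = (fun j => x j.1) := by
      intro x; funext j; simp [hflip, Function.update_of_ne j.2]
    have hflipi : ∀ x, flip x i = !(x i) := by intro x; simp [hflip]
    have hflipne : ∀ (x : Fin n → Bool) (j : Fin n), j ≠ i → flip x j = x j := by
      intro x j hj; simp [hflip, Function.update_of_ne hj]
    have key : ∀ w : Fin n → Bool, w i = false →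
        ((-1:ℂ) ^ (f a).toNat) * ((-1) ^ (f (flip w)).toNat)
          = ((-1) ^ (f (flip a)).toNat) * ((-1) ^ (f w).toNat) := by
      intro w hw
      have hainev : a i = false := rfl
      rw [h a, h (flip a), h w, h (flip w), hrest a, hrest w, hflipi, hflipi, hw, hainev]
      ring
    have hfval : ∀ x : Fin n → Bool, x ≠ a → x ≠ b → f x = x i0 := by
      intro x hxa hxb; simp [hf, hxa, hxb]
    have hfa : f a = true := by simp [hf, ha]
    have hfa'ne_a : flip a ≠ a := fun hh => by
      have := congrFun hh i
      rw [hflipi] at this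
      simp [ha] at this
    by_cases hIi0 : i = i0
    · -- case i = 0 ; take w = e_{i2}
      subst hIi0
      set w : Fin n → Bool := fun j => decide (j = i2) with hw
      have hwi : w i0 = false := by simp [hw, h02]
      have hwa : w ≠ a := fun hh => by
        have := congrFun hh i2; simp [hw, ha] at this
      have hwb : w ≠ b := fun hh => by
        have := congrFun hh i0; rw [hbi0] at this; simp [hw, h02] at this
      have hfw : f w = false := by rw [hfval w hwa hwb]; exact hwi
      have hfw' : f (flip w) = true := by
        have h1' : flip w ≠ a := fun hh => by
          have := congrFun hh i0; rw [hflipi, hwi] at this; simp [ha] at this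
        have h2' : flip w ≠ b := fun hh => by
          have := congrFun hh i2
          rw [hflipne w i2 (Ne.symm h02), hbi2] at this
          simp [hw] at this
        rw [hfval _ h1' h2', hflipi, hwi]
        rfl
      have hfa' : f (flip a) = true := by
        have h2' : flip a ≠ b := fun hh => by
          have := congrFun hh i1
          rw [hflipne a i1 (Ne.symm h01), hbi1] at this
          simp [ha] at this
        rw [hfval _ hfa'ne_a h2', hflipi]
        rfl
      have hkey := key w hwi
      rw [hfa, hfa', hfw, hfw'] at hkey
      norm_num at hkey
    · by_cases hIi1 : i = i1
      · -- case i = 1 ; take w = e_{i2}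
        subst hIi1
        set w : Fin n → Bool := fun j => decide (j = i2) with hw
        have hwi : w i1 = false := by simp [hw, h12]
        have hwa : w ≠ a := fun hh => by
          have := congrFun hh i2; simp [hw, ha] at this
        have hwb : w ≠ b := fun hh => by
          have := congrFun hh i1; rw [hbi1] at this; simp [hw, h12] at this
        have hfw : f w = false := by rw [hfval w hwa hwb]; simp [hw, h02]
        have hfw' : f (flip w) = false := by
          have h1' : flip w ≠ a := fun hh => by
            have := congrFun hh i1; rw [hflipi, hwi] at this; simp [ha] at this
          have h2' : flip w ≠ b := fun hh => by
            have := congrFun hh i2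
            rw [hflipne w i2 (Ne.symm h12), hbi2] at this
            simp [hw] at this
          rw [hfval _ h1' h2', hflipne w i0 h01]
          simp [hw, h02]
        have hfa' : f (flip a) = false := by
          have h2' : flip a ≠ b := fun hh => by
            have := congrFun hh i0
            rw [hflipne a i0 h01, hbi0] at this
            simp [ha] at this
          rw [hfval _ hfa'ne_a h2', hflipne a i0 h01]
        have hkey := key w hwi
        rw [hfa, hfa', hfw, hfw'] at hkey
        norm_num at hkey
      · -- case i ∉ {0,1} ; take w = e_{i0}
        have hi0i : i0 ≠ i := fun hc => hIi0 hc.symm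
        have hbiF : b i = false := by
          have hv0 : i.val ≠ 0 := fun hv => hIi0 (by rw [hi0]; exact Fin.ext hv)
          have hv1 : i.val ≠ 1 := fun hv => hIi1 (by rw [hi1]; exact Fin.ext hv)
          simp [hb]; omega
        set w : Fin n → Bool := fun j => decide (j = i0) with hw
        have hwi : w i = false := by simp [hw, hIi0]
        have hwa : w ≠ a := fun hh => by
          have := congrFun hh i0; simp [hw, ha] at this
        have hwb : w ≠ b := fun hh => by
          have := congrFun hh i1; rw [hbi1] at this; simp [hw, h10] at this
        have hfw : f w = true := by rw [hfval w hwa hwb]; simp [hw]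
        have hfw' : f (flip w) = true := by
          have h1' : flip w ≠ a := fun hh => by
            have := congrFun hh i0
            rw [hflipne w i0 hi0i] at this
            simp [hw, ha] at this
          have h2' : flip w ≠ b := fun hh => by
            have := congrFun hh i
            rw [hflipi, hwi, hbiF] at this
            simp at this
          rw [hfval _ h1' h2', hflipne w i0 hi0i]
          simp [hw]
        have hfa' : f (flip a) = false := by
          have h2' : flip a ≠ b := fun hh => by
            have := congrFun hh i0
            rw [hflipne a i0 hi0i, hbi0] at this
            simp [ha] at this
          rw [hfval _ hfa'ne_a h2', hflipne a i0 hi0i]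
        have hkey := key w hwi
        rw [hfa, hfa', hfw, hfw'] at hkey
        norm_num at hkey
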